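/- Define Y₁(v) = v₁·(−v₃v₁, −v₃v₂, 1−v₃²) for v = (v₁,v₂,v₃) ∈ ℝ³. If γ = (γ₁, γ₂, γ₃) : ℝ → ℝ³ is differentiable with γ'(t) = Y₁(γ(t)) for all t ∈ ℝ, |γ(0)| = 1, and γ₁(0) ≠ 0, then there exists t ∈ ℝ with γ₃(t) = 0 (every non-trivial orbit of Y₁ on the unit sphere intersects the equator {v₃ = 0}). -/

import Mathlib

/-- The vector `(a,b,c)` regarded as an element of Euclidean `ℝ³`. -/
noncomputable def evec3 (a b c : ℝ) : EuclideanSpace ℝ (Fin 3) := WithLp.toLp 2 ![a, b, c]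

/-- `Y₁(v) = v₁·(−v₃v₁, −v₃v₂, 1−v₃²)`. -/
noncomputable def Y1 : EuclideanSpace ℝ (Fin 3) → EuclideanSpace ℝ (Fin 3) :=
  fun v => (v 0) • evec3 (-(v 2) * v 0) (-(v 2) * v 1) (1 - (v 2) ^ 2)

/-- Every non-trivial orbit of `Y₁` on the unit sphere intersects the
equator `{v₃ = 0}`: if `γ' = Y₁(γ)` on `ℝ`, `|γ(0)| = 1` and `γ₁(0) ≠ 0`, then
`γ₃(t) = 0` for some `t`. -/
theorem statement17 (γ : ℝ → EuclideanSpace ℝ (Fin 3))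
    (hγ : ∀ t : ℝ, HasDerivAt γ (Y1 (γ t)) t) (h0 : ‖γ 0‖ = 1) (h1 : γ 0 0 ≠ 0) :
    ∃ t : ℝ, γ t 2 = 0 := by
  -- component derivatives: x' = -x²z, z' = x(1-z²)
  have hxd : ∀ t, HasDerivAt (fun t => γ t 0) (-(γ t 0)^2 * γ t 2) t := by
    intro t
    have h := (EuclideanSpace.proj (0 : Fin 3)).hasFDerivAt.comp_hasDerivAt t (hγ t)
    have e : (EuclideanSpace.proj (0 : Fin 3)) (Y1 (γ t)) = -(γ t 0)^2 * γ t 2 := by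
      simp [Y1, evec3]; ring
    rwa [e] at h
  have hzd : ∀ t, HasDerivAt (fun t => γ t 2) (γ t 0 * (1 - (γ t 2)^2)) t := by
    intro t
    have h := (EuclideanSpace.proj (2 : Fin 3)).hasFDerivAt.comp_hasDerivAt t (hγ t)
    have e : (EuclideanSpace.proj (2 : Fin 3)) (Y1 (γ t)) = γ t 0 * (1 - (γ t 2)^2) := by
      simp [Y1, evec3]
    rwa [e] at h
  set c : ℝ := γ 0 2 / γ 0 0 with hc
  set a : ℝ → ℝ := fun t => -(γ t 0 * γ t 2) with ha
  have hac : Continuous a := by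
    apply Continuous.neg
    exact (continuous_iff_continuousAt.mpr fun t => (hxd t).continuousAt).mul
      (continuous_iff_continuousAt.mpr fun t => (hzd t).continuousAt)
  set A : ℝ → ℝ := fun u => ∫ s in (0:ℝ)..u, a s with hA
  have hAd : ∀ t, HasDerivAt A (a t) t := fun t =>
    intervalIntegral.integral_hasDerivAt_right (hac.intervalIntegrable 0 t)
      hac.aestronglyMeasurable.stronglyMeasurableAtFilter hac.continuousAt
  set h : ℝ → ℝ := fun t => γ t 2 - γ t 0 * (t + c) with hh
  have hhd : ∀ t, HasDerivAt h (a t * h t) t := by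
    intro t
    have hd := (hzd t).sub ((hxd t).mul ((hasDerivAt_id t).add_const c))
    refine hd.congr_deriv ?_
    simp only [a, h, id]
    ring
  set g : ℝ → ℝ := fun t => h t * Real.exp (-(A t)) with hg
  have hgd : ∀ t, HasDerivAt g 0 t := by
    intro t
    have hd := (hhd t).mul ((hAd t).neg.exp)
    refine hd.congr_deriv ?_
    ring
  have hgconst : ∀ t, g t = g 0 := by
    intro t
    apply is_const_of_deriv_eq_zero
    · exact fun s => (hgd s).differentiableAt
    · exact fun s => (hgd s).deriv
  have hg0 : g 0 = 0 := by
    have hh0 : h 0 = 0 := by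
      simp only [hh, hc, zero_add]
      field_simp
      simp
    simp [hg, hh0]
  refine ⟨-c, ?_⟩
  have hgc := (hgconst (-c)).trans hg0
  have hhmc : h (-c) = 0 := by
    rcases mul_eq_zero.mp hgc with h' | h'
    · exact h'
    · exact absurd h' (Real.exp_ne_zero _)
  have : γ (-c) 2 - γ (-c) 0 * (-c + c) = 0 := hhmc
  simpa using this
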